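/- If T is a bounded totally paranormal operator whose spectrum lies on the unit circle, then T is unitary. -/

import Mathlib

open Filter ENNReal
open scoped NNReal Topology

section aux

variable {H : Type*} [NormedAddCommGroup H] [InnerProductSpace ℂ H] [CompleteSpace H]

/-- Log-convexity chain for paranormal operators. -/
lemma para_chain (T : H →L[ℂ] H)
    (para : ∀ x : H, ‖T x‖ ^ 2 ≤ ‖T (T x)‖ * ‖x‖) (x : H) :
    ∀ n : ℕ, ‖T x‖ * ‖(T ^ n) x‖ ≤ ‖(T ^ (n + 1)) x‖ * ‖x‖ := by
  have hpow : ∀ m : ℕ, (T ^ (m + 1)) x = T ((T ^ m) x) := by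
    intro m
    rw [pow_succ']
    rfl
  intro n
  induction n with
  | zero => simp [mul_comm]
  | succ n ih =>
      rcases eq_or_lt_of_le (norm_nonneg ((T ^ (n + 1)) x)) with h0 | h0
      · rw [← h0, mul_zero]
        positivity
      · -- paranormality at (T ^ n) x
        have hp : ‖(T ^ (n + 1)) x‖ ^ 2 ≤ ‖(T ^ (n + 1 + 1)) x‖ * ‖(T ^ n) x‖ := by
          have h2 := para ((T ^ n) x)
          rw [← hpow n, ← hpow (n + 1)] at h2
          exact h2
        have key : (‖T x‖ * ‖(T ^ (n + 1)) x‖) * ‖(T ^ (n + 1)) x‖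
            ≤ (‖(T ^ (n + 1 + 1)) x‖ * ‖x‖) * ‖(T ^ (n + 1)) x‖ := by
          calc (‖T x‖ * ‖(T ^ (n + 1)) x‖) * ‖(T ^ (n + 1)) x‖
              = ‖T x‖ * (‖(T ^ (n + 1)) x‖ ^ 2) := by ring
            _ ≤ ‖T x‖ * (‖(T ^ (n + 1 + 1)) x‖ * ‖(T ^ n) x‖) := by
                exact mul_le_mul_of_nonneg_left hp (norm_nonneg _)
            _ = (‖T x‖ * ‖(T ^ n) x‖) * ‖(T ^ (n + 1 + 1)) x‖ := by ring
            _ ≤ (‖(T ^ (n + 1)) x‖ * ‖x‖) * ‖(T ^ (n + 1 + 1)) x‖ := by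
                exact mul_le_mul_of_nonneg_right ih (norm_nonneg _)
            _ = (‖(T ^ (n + 1 + 1)) x‖ * ‖x‖) * ‖(T ^ (n + 1)) x‖ := by ring
        exact le_of_mul_le_mul_right key h0

lemma para_pow (T : H →L[ℂ] H)
    (para : ∀ x : H, ‖T x‖ ^ 2 ≤ ‖T (T x)‖ * ‖x‖) (x : H) :
    ∀ n : ℕ, ‖T x‖ ^ n * ‖x‖ ≤ ‖(T ^ n) x‖ * ‖x‖ ^ n := by
  intro n
  induction n with
  | zero => simp
  | succ n ih =>
      calc ‖T x‖ ^ (n + 1) * ‖x‖ = ‖T x‖ * (‖T x‖ ^ n * ‖x‖) := by ring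
        _ ≤ ‖T x‖ * (‖(T ^ n) x‖ * ‖x‖ ^ n) :=
            mul_le_mul_of_nonneg_left ih (norm_nonneg _)
        _ = (‖T x‖ * ‖(T ^ n) x‖) * ‖x‖ ^ n := by ring
        _ ≤ (‖(T ^ (n + 1)) x‖ * ‖x‖) * ‖x‖ ^ n :=
            mul_le_mul_of_nonneg_right (para_chain T para x n) (by positivity)
        _ = ‖(T ^ (n + 1)) x‖ * ‖x‖ ^ (n + 1) := by ring

/-- A paranormal operator with spectral radius at most 1 is a contraction. -/
lemma para_contraction (T : H →L[ℂ] H)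
    (para : ∀ x : H, ‖T x‖ ^ 2 ≤ ‖T (T x)‖ * ‖x‖)
    (hr : spectralRadius ℂ T ≤ 1) (x : H) : ‖T x‖ ≤ ‖x‖ := by
  rcases eq_or_ne x 0 with rfl | hx
  · simp
  · -- reduce to unit vectors: show ‖T x‖ / ‖x‖ ≤ 1 via y = x / ‖x‖
    have hx' : (0:ℝ) < ‖x‖ := norm_pos_iff.mpr hx
    set y : H := (‖x‖ : ℂ)⁻¹ • x with hy
    have hyn : ‖y‖ = 1 := by
      simp [hy, norm_smul, hx'.ne', abs_of_pos hx']
    have hTy : ∀ n : ℕ, ‖T y‖ ^ n ≤ ‖T ^ n‖ := by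
      intro n
      have h1 := para_pow T para y n
      rw [hyn, one_pow, mul_one, mul_one] at h1
      calc ‖T y‖ ^ n ≤ ‖(T ^ n) y‖ := h1
        _ ≤ ‖T ^ n‖ * ‖y‖ := (T ^ n).le_opNorm y
        _ = ‖T ^ n‖ := by rw [hyn, mul_one]
    -- pass to ℝ≥0∞ and use Gelfand's formula
    have key : (‖T y‖₊ : ℝ≥0∞) ≤ 1 := by
      have gel := spectrum.pow_nnnorm_pow_one_div_tendsto_nhds_spectralRadius (T : H →L[ℂ] H)
      have hle : (‖T y‖₊ : ℝ≥0∞) ≤ spectralRadius ℂ T := by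
        refine ge_of_tendsto gel ?_
        filter_upwards [eventually_ge_atTop 1] with n hn
        have h1 : (‖T y‖₊ : ℝ≥0∞) ^ (n : ℕ) ≤ (‖T ^ n‖₊ : ℝ≥0∞) := by
          rw [← ENNReal.coe_pow, ENNReal.coe_le_coe]
          have := hTy n
          rw [← NNReal.coe_le_coe]
          push_cast
          simpa using this
        calc (‖T y‖₊ : ℝ≥0∞) = ((‖T y‖₊ : ℝ≥0∞) ^ (n : ℕ)) ^ (1 / (n:ℝ)) := by
              rw [← ENNReal.rpow_natCast, ← ENNReal.rpow_mul,
                mul_one_div, div_self (by exact_mod_cast Nat.one_le_iff_ne_zero.mp hn :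
                  (n:ℝ) ≠ 0), ENNReal.rpow_one]
          _ ≤ (‖T ^ n‖₊ : ℝ≥0∞) ^ (1 / (n:ℝ)) :=
              ENNReal.rpow_le_rpow h1 (by positivity)
      exact hle.trans hr
    have hTy1 : ‖T y‖ ≤ 1 := by
      have := ENNReal.coe_le_one_iff.mp key
      exact_mod_cast this
    -- unfold y
    have : ‖T y‖ = ‖x‖⁻¹ * ‖T x‖ := by
      simp [hy, map_smul, norm_smul, abs_of_pos hx']
    rw [this] at hTy1
    calc ‖T x‖ = ‖x‖ * (‖x‖⁻¹ * ‖T x‖) := by field_simp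
      _ ≤ ‖x‖ * 1 := mul_le_mul_of_nonneg_left hTy1 hx'.le
      _ = ‖x‖ := mul_one _

end aux

theorem stmt_15 {H : Type*} [NormedAddCommGroup H] [InnerProductSpace ℂ H]
    [CompleteSpace H] (T : H →L[ℂ] H)
    (hT : ∀ (lam : ℂ) (x : H),
      ‖(T - lam • 1) x‖ ^ 2 ≤ ‖((T - lam • 1) ∘L (T - lam • 1)) x‖ * ‖x‖)
    (hσ : ∀ z ∈ spectrum ℂ T, ‖z‖ = 1) :
    T ∈ unitary (H →L[ℂ] H) := by
  classical
  -- paranormality of T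
  have para : ∀ x : H, ‖T x‖ ^ 2 ≤ ‖T (T x)‖ * ‖x‖ := by
    intro x
    have := hT 0 x
    simpa using this
  -- T is invertible
  have hunit : IsUnit T := by
    rw [← spectrum.zero_notMem_iff ℂ]
    intro h0
    have := hσ 0 h0
    simp at this
  obtain ⟨u, hu⟩ := hunit
  set S : H →L[ℂ] H := ↑u⁻¹ with hS
  have hTS1 : T * S = 1 := by rw [← hu, hS]; exact u.mul_inv
  have hST1 : S * T = 1 := by rw [← hu, hS]; exact u.inv_mul
  have hTS : ∀ x : H, T (S x) = x := by
    intro x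
    have h := congrFun (congrArg DFunLike.coe hTS1) x
    simpa [ContinuousLinearMap.mul_apply] using h
  have hST : ∀ x : H, S (T x) = x := by
    intro x
    have h := congrFun (congrArg DFunLike.coe hST1) x
    simpa [ContinuousLinearMap.mul_apply] using h
  -- paranormality of S
  have paraS : ∀ x : H, ‖S x‖ ^ 2 ≤ ‖S (S x)‖ * ‖x‖ := by
    intro x
    have h1 := para (S (S x))
    rw [hTS, hTS] at h1
    rw [mul_comm] at h1
    exact h1
  -- spectral radii
  have hrT : spectralRadius ℂ T ≤ 1 := by
    rw [spectralRadius]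
    refine iSup₂_le fun z hz => ?_
    have : ‖z‖ = 1 := by exact hσ z hz
    simp [← ENNReal.coe_one, ENNReal.coe_le_coe, ← NNReal.coe_le_coe, this]
  have hrS : spectralRadius ℂ S ≤ 1 := by
    rw [spectralRadius]
    refine iSup₂_le fun z hz => ?_
    have hz0 : z ≠ 0 := by
      intro h
      exact (spectrum.ne_zero_of_mem_of_unit (hS ▸ hz)) h
    have hzinv : z⁻¹ ∈ spectrum ℂ T := by
      have := (spectrum.inv_mem_iff (r := (Units.mk0 z hz0)⁻¹) (a := u)).mpr
      simp only [inv_inv, Units.val_mk0, Units.val_inv_eq_inv_val] at this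
      rw [hu] at this
      exact this (hS ▸ hz)
    have habs : ‖z⁻¹‖ = 1 := hσ _ hzinv
    have : ‖z‖ = 1 := by
      rwa [norm_inv, inv_eq_one] at habs
    simp [← ENNReal.coe_one, ENNReal.coe_le_coe, ← NNReal.coe_le_coe, this]
  -- contractions
  have hTc := para_contraction T para hrT
  have hSc := para_contraction S paraS hrS
  -- T is an isometry
  have hiso : ∀ x : H, ‖T x‖ = ‖x‖ := by
    intro x
    refine le_antisymm (hTc x) ?_
    calc ‖x‖ = ‖S (T x)‖ := by rw [hST]
      _ ≤ ‖T x‖ := hSc (T x)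
  -- build the linear isometry and conclude
  have hinner : ∀ x y : H, inner ℂ (T x) (T y) = inner ℂ x y := by
    intro x y
    exact LinearIsometry.inner_map_map ⟨(T : H →ₗ[ℂ] H), hiso⟩ x y
  have hstar : star T * T = 1 := by
    rw [ContinuousLinearMap.star_eq_adjoint]
    ext x
    refine ext_inner_right ℂ fun y => ?_
    rw [ContinuousLinearMap.mul_apply, ContinuousLinearMap.adjoint_inner_left]
    simpa using hinner x y
  have hstar2 : T * star T = 1 := by
    have hSeq : star T = S := by
      calc star T = star T * (T * S) := by rw [hTS1, mul_one]
        _ = (star T * T) * S := by rw [mul_assoc]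
        _ = S := by rw [hstar, one_mul]
    rw [hSeq]
    exact hTS1
  exact Unitary.mem_iff.mpr ⟨hstar, hstar2⟩
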